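/- Suppose λ : ℝ → ℂ and x : ℝ → E are differentiable at 0, satisfy λ(θ)·x(θ) = θ·L(x(θ)) + (1−θ)·K(x(θ)) for all θ ∈ ℝ, and x(0) = e_i, λ(0) = μ_i for some fixed index i. Then for every index k ≠ i with μ_k ≠ μ_i, the component of the derivative x′(0) along e_k is ⟨x′(0), e_k⟩ = X_{i,k} / (μ_i − μ_k). -/

import Mathlib

open scoped InnerProductSpace

/-- If `λ : ℝ → ℂ` and `x : ℝ → E` are differentiable at `0`, satisfy
`λ(θ) • x(θ) = θ • L(x θ) + (1-θ) • K(x θ)` for all real `θ`, and `x 0 = e i`,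
`λ 0 = μ i`, then for every index `k ≠ i` with `μ k ≠ μ i`, the component of the
derivative `x′(0)` along `e k` is `⟨x′(0), e k⟩ = X_{i,k} / (μ_i - μ_k)`, where
`X_{m,l} = ⟨L e_m, e_l⟩` (inner product linear in the first argument). -/
theorem deriv_eigenvector_component_at_zero {E : Type*} [NormedAddCommGroup E]
    [InnerProductSpace ℂ E] [FiniteDimensional ℂ E] {n : ℕ}
    (e : OrthonormalBasis (Fin n) ℂ E)
    (K L : E →ₗ[ℂ] E) (μ : Fin n → ℂ) (hK : ∀ k, K (e k) = μ k • e k)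
    (lam : ℝ → ℂ) (x : ℝ → E)
    (hlam : DifferentiableAt ℝ lam 0) (hx : DifferentiableAt ℝ x 0)
    (hlx : ∀ θ : ℝ, lam θ • x θ = (θ : ℂ) • L (x θ) + ((1 : ℂ) - (θ : ℂ)) • K (x θ))
    (i : Fin n) (hx0 : x 0 = e i) (hlam0 : lam 0 = μ i) :
    ∀ k : Fin n, k ≠ i → μ k ≠ μ i →
      ⟪e k, deriv x 0⟫_ℂ = ⟪e k, L (e i)⟫_ℂ / (μ i - μ k) := by

  intro k hk hmu
  set x' := deriv x 0 with hx'def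
  have hxd : HasDerivAt x x' 0 := hx.hasDerivAt
  have hld : HasDerivAt lam (deriv lam 0) 0 := hlam.hasDerivAt
  have hco : HasDerivAt (fun θ : ℝ => (θ : ℂ)) 1 0 := by
    exact Complex.ofRealCLM.hasDerivAt
  have hLx : HasDerivAt (fun θ => L (x θ)) (L x') 0 := by
    exact ((LinearMap.toContinuousLinearMap L).restrictScalars ℝ).hasFDerivAt.comp_hasDerivAt 0 hxd
  have hKx : HasDerivAt (fun θ => K (x θ)) (K x') 0 := by
    exact ((LinearMap.toContinuousLinearMap K).restrictScalars ℝ).hasFDerivAt.comp_hasDerivAt 0 hxd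
  have h1 : HasDerivAt (fun θ => lam θ • x θ) (lam 0 • x' + deriv lam 0 • x 0) 0 :=
    hld.smul hxd
  have h2 : HasDerivAt (fun θ : ℝ => (θ : ℂ) • L (x θ) + ((1:ℂ) - (θ:ℂ)) • K (x θ))
      (((0:ℝ):ℂ) • L x' + (1:ℂ) • L (x 0) + (((1:ℂ) - ((0:ℝ):ℂ)) • K x' + ((0:ℂ) - 1) • K (x 0))) 0 :=
    (hco.smul hLx).add (((hasDerivAt_const (0:ℝ) (1:ℂ)).sub hco).smul hKx)
  have hfun : (fun θ => lam θ • x θ)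
      = (fun θ : ℝ => (θ:ℂ) • L (x θ) + ((1:ℂ) - (θ:ℂ)) • K (x θ)) := funext hlx
  rw [hfun] at h1
  have heq := h1.unique h2
  have hKinner : ∀ v : E, ⟪e k, K v⟫_ℂ = μ k * ⟪e k, v⟫_ℂ := by
    intro v
    conv_lhs => rw [← e.sum_repr v]
    rw [map_sum, inner_sum]
    conv_rhs => rw [← e.sum_repr v, inner_sum]
    rw [Finset.mul_sum]
    refine Finset.sum_congr rfl fun j _ => ?_
    simp only [map_smul, hK, inner_smul_right, smul_smul]
    by_cases hj : j = k
    · subst hj; ring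
    · have : ⟪e k, e j⟫_ℂ = 0 := e.orthonormal.2 (Ne.symm hj)
      simp [this]
  have hki : ⟪e k, e i⟫_ℂ = 0 := e.orthonormal.2 hk
  have h3 := congrArg (fun v => ⟪e k, v⟫_ℂ) heq
  simp only [hx0, hlam0, inner_add_right, inner_smul_right, hKinner, hki,
    Complex.ofReal_zero, zero_mul, one_mul, mul_zero, sub_zero, zero_add, add_zero,
    zero_sub, neg_mul, neg_zero] at h3
  have hne : μ i - μ k ≠ 0 := sub_ne_zero.mpr (Ne.symm hmu)
  field_simp
  linear_combination h3
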